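/- Suppose there are two agents and m indivisible items with additive utilities. Let π be a picking sequence of length m and let π' be a picking sequence of length m obtained from π by moving some of agent 1's picks earlier (possibly none), inserting occurrences of agent 1 in some positions (possibly none), and trimming the suffix of the resulting sequence so that it has length m. Then, for any utility functions of the two agents, agent 1 receives at least as much total utility from the allocation produced by π' as from the allocation produced by π. In particular, for two agents any weight-consistent family of picking sequences satisfies weight-monotonicity. -/

import Mathlib

open Finset

/-- The favorite item of an agent with item-utility function `u` among a remaining
set `R` of items: a highest-valued item, ties broken in favor of the lower-numbered item. -/
noncomputable def favorite {m : ℕ} (u : Fin m → ℝ) (R : Finset (Fin m)) : Option (Fin m) :=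
  if h : (R.filter fun j => ∀ j' ∈ R, u j' ≤ u j).Nonempty then
    some ((R.filter fun j => ∀ j' ∈ R, u j' ≤ u j).min' h)
  else none

/-- One step of the picking process: agent `a` picks her favorite remaining item. -/
noncomputable def pickStep {n m : ℕ} (u : Fin n → Fin m → ℝ)
    (st : Finset (Fin m) × (Fin n → Finset (Fin m))) (a : Fin n) :
    Finset (Fin m) × (Fin n → Finset (Fin m)) :=
  match favorite (u a) st.1 with
  | none => st
  | some j => (st.1.erase j, Function.update st.2 a (insert j (st.2 a)))

/-- The allocation produced by letting agents pick their favorite remaining items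
in the order given by the picking sequence `π`. -/
noncomputable def allocate {n m : ℕ} (u : Fin n → Fin m → ℝ) (π : List (Fin n)) :
    Fin n → Finset (Fin m) :=
  (π.foldl (pickStep u) (Finset.univ, fun _ => ∅)).2

set_option linter.unusedSectionVars false

variable {m : ℕ}

/-- `j` beats `j'` in the preference order of utility `u` (higher value, ties to lower index). -/
def beats (u : Fin m → ℝ) (j j' : Fin m) : Prop := u j' < u j ∨ (u j' = u j ∧ j < j')

lemma beats_le {u : Fin m → ℝ} {j j' : Fin m} (h : beats u j j') : u j' ≤ u j := by
  rcases h with h | ⟨h, _⟩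
  · exact le_of_lt h
  · exact le_of_eq h

lemma favorite_empty (u : Fin m → ℝ) : favorite u (∅ : Finset (Fin m)) = none := by
  simp [favorite]

lemma exists_favorite {u : Fin m → ℝ} {R : Finset (Fin m)} (h : R.Nonempty) :
    ∃ j, favorite u R = some j := by
  obtain ⟨j, hj, hmax⟩ := R.exists_max_image u h
  have hne : (R.filter fun j => ∀ j' ∈ R, u j' ≤ u j).Nonempty :=
    ⟨j, mem_filter.2 ⟨hj, hmax⟩⟩
  exact ⟨_, dif_pos hne⟩

lemma favorite_spec {u : Fin m → ℝ} {R : Finset (Fin m)} {j : Fin m}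
    (h : favorite u R = some j) : j ∈ R ∧ ∀ j' ∈ R, j' ≠ j → beats u j j' := by
  by_cases hne : (R.filter fun j => ∀ j' ∈ R, u j' ≤ u j).Nonempty
  · simp only [favorite, dif_pos hne, Option.some.injEq] at h
    have hmem := (R.filter fun j => ∀ j' ∈ R, u j' ≤ u j).min'_mem hne
    rw [h] at hmem
    rw [mem_filter] at hmem
    refine ⟨hmem.1, fun j' hj' hne' => ?_⟩
    rcases lt_or_eq_of_le (hmem.2 j' hj') with hlt | heq
    · exact Or.inl hlt
    · refine Or.inr ⟨heq, ?_⟩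
      have hj'f : j' ∈ R.filter fun j => ∀ j'' ∈ R, u j'' ≤ u j := by
        refine mem_filter.2 ⟨hj', fun j'' hj'' => ?_⟩
        rw [heq]; exact hmem.2 j'' hj''
      have := Finset.min'_le _ _ hj'f
      rw [h] at this
      exact lt_of_le_of_ne this (Ne.symm hne')
  · simp [favorite, dif_neg hne] at h

lemma favorite_of_spec {u : Fin m → ℝ} {R : Finset (Fin m)} {j : Fin m}
    (h1 : j ∈ R) (h2 : ∀ j' ∈ R, j' ≠ j → beats u j j') : favorite u R = some j := by
  have hjf : j ∈ R.filter fun j => ∀ j' ∈ R, u j' ≤ u j := by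
    refine mem_filter.2 ⟨h1, fun j' hj' => ?_⟩
    by_cases hne : j' = j
    · subst hne; exact le_refl _
    · exact beats_le (h2 j' hj' hne)
  have hne : (R.filter fun j => ∀ j' ∈ R, u j' ≤ u j).Nonempty := ⟨j, hjf⟩
  simp only [favorite, dif_pos hne, Option.some.injEq]
  refine le_antisymm (Finset.min'_le _ _ hjf) (Finset.le_min' _ _ _ ?_)
  intro y hy
  rw [mem_filter] at hy
  by_cases hyj : y = j
  · subst hyj; exact le_refl _
  · rcases h2 y hy.1 hyj with hlt | ⟨_, hj⟩
    · exact absurd (hy.2 j h1) (not_le.2 hlt)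
    · exact hj.le

lemma favorite_mem {u : Fin m → ℝ} {R : Finset (Fin m)} {j : Fin m}
    (h : favorite u R = some j) : j ∈ R := (favorite_spec h).1

lemma favorite_max {u : Fin m → ℝ} {R : Finset (Fin m)} {j : Fin m}
    (h : favorite u R = some j) : ∀ j' ∈ R, u j' ≤ u j := by
  intro j' hj'
  by_cases hne : j' = j
  · subst hne; exact le_refl _
  · exact beats_le ((favorite_spec h).2 j' hj' hne)

lemma favorite_erase {u : Fin m → ℝ} {R : Finset (Fin m)} {j x : Fin m}
    (h : favorite u R = some j) (hx : x ≠ j) : favorite u (R.erase x) = some j := by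
  obtain ⟨h1, h2⟩ := favorite_spec h
  exact favorite_of_spec (mem_erase.2 ⟨fun hc => hx hc.symm, h1⟩)
    (fun j' hj' hne => h2 j' (mem_erase.1 hj').2 hne)

lemma favorite_eq_none {u : Fin m → ℝ} {R : Finset (Fin m)} (h : favorite u R = none) :
    R = ∅ := by
  by_contra hne
  obtain ⟨j, hj⟩ := exists_favorite (u := u) (Finset.nonempty_iff_ne_empty.2 hne)
  rw [h] at hj; cases hj
/-- The total value gained by agent `0` when the picking sequence `σ` is executed
starting from remaining set `R`. -/
noncomputable def gain (u : Fin 2 → Fin m → ℝ) : List (Fin 2) → Finset (Fin m) → ℝ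
  | [], _ => 0
  | a :: σ, R => (favorite (u a) R).elim (gain u σ R)
      (fun j => (if a = 0 then u 0 j else 0) + gain u σ (R.erase j))

@[simp] lemma gain_nil (u : Fin 2 → Fin m → ℝ) (R : Finset (Fin m)) : gain u [] R = 0 := rfl

lemma gain_cons (u : Fin 2 → Fin m → ℝ) (a : Fin 2) (σ : List (Fin 2)) (R : Finset (Fin m)) :
    gain u (a :: σ) R = (favorite (u a) R).elim (gain u σ R)
      (fun j => (if a = 0 then u 0 j else 0) + gain u σ (R.erase j)) := rfl

lemma gain_cons_some {u : Fin 2 → Fin m → ℝ} {a : Fin 2} {σ : List (Fin 2)}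
    {R : Finset (Fin m)} {j : Fin m} (h : favorite (u a) R = some j) :
    gain u (a :: σ) R = (if a = 0 then u 0 j else 0) + gain u σ (R.erase j) := by
  rw [gain_cons, h]; rfl

lemma gain_cons_none {u : Fin 2 → Fin m → ℝ} {a : Fin 2} {σ : List (Fin 2)}
    {R : Finset (Fin m)} (h : favorite (u a) R = none) :
    gain u (a :: σ) R = gain u σ R := by
  rw [gain_cons, h]; rfl

lemma gain_empty (u : Fin 2 → Fin m → ℝ) (σ : List (Fin 2)) : gain u σ (∅ : Finset (Fin m)) = 0 := by
  induction σ with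
  | nil => rfl
  | cons a σ ih => rw [gain_cons_none (favorite_empty _)]; exact ih

section
variable {u : Fin 2 → Fin m → ℝ} (hu0 : ∀ j, 0 ≤ u 0 j)
include hu0

lemma gain_nonneg : ∀ (σ : List (Fin 2)) (R : Finset (Fin m)), 0 ≤ gain u σ R := by
  intro σ
  induction σ with
  | nil => intro R; simp
  | cons a σ ih =>
    intro R
    rcases h : favorite (u a) R with _ | j
    · rw [gain_cons_none h]; exact ih R
    · rw [gain_cons_some h]
      have : (0:ℝ) ≤ if a = 0 then u 0 j else 0 := by
        split <;> simp [hu0]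
      exact add_nonneg this (ih _)

lemma gain_erase_le : ∀ (σ : List (Fin 2)) (R : Finset (Fin m)) (z : Fin m),
    gain u σ (R.erase z) ≤ gain u σ R := by
  intro σ
  induction σ with
  | nil => intro R z; simp
  | cons a σ ih =>
    intro R z
    by_cases hz : z ∈ R
    swap
    · rw [Finset.erase_eq_of_notMem hz]
    obtain ⟨x, hx⟩ := exists_favorite (u := u a) ⟨z, hz⟩
    by_cases hxz : x = z
    · subst hxz
      by_cases hRe : (R.erase x).Nonempty
      · obtain ⟨x', hx'⟩ := exists_favorite (u := u a) hRe
        rw [gain_cons_some hx, gain_cons_some hx']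
        have hpick : (if a = 0 then u 0 x' else 0) ≤ (if a = 0 then u 0 x else 0) := by
          split
          · next ha =>
            subst ha
            exact favorite_max hx x' (Finset.mem_of_mem_erase (favorite_mem hx'))
          · exact le_refl _
        exact add_le_add hpick (ih _ _)
      · rw [Finset.not_nonempty_iff_eq_empty] at hRe
        rw [hRe, gain_empty, gain_cons_some hx, hRe, gain_empty]
        have : (0:ℝ) ≤ if a = 0 then u 0 x else 0 := by split <;> simp [hu0]
        linarith
    · have hx' : favorite (u a) (R.erase z) = some x := favorite_erase hx (Ne.symm hxz)
      rw [gain_cons_some hx, gain_cons_some hx', Finset.erase_right_comm]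
      exact add_le_add (le_refl _) (ih _ _)

lemma gain_le_erase_add : ∀ (σ : List (Fin 2)) (R : Finset (Fin m)) (z : Fin m) (c : ℝ),
    z ∈ R → (∀ j ∈ R, u 0 j ≤ c) → 0 ≤ c → gain u σ R ≤ c + gain u σ (R.erase z) := by
  intro σ
  induction σ with
  | nil => intro R z c _ _ hc; simpa using hc
  | cons a σ ih =>
    intro R z c hz hbound hc
    obtain ⟨x, hx⟩ := exists_favorite (u := u a) ⟨z, hz⟩
    by_cases hxz : x = z
    · subst hxz
      by_cases hRe : (R.erase x).Nonempty
      · obtain ⟨x', hx'⟩ := exists_favorite (u := u a) hRe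
        rw [gain_cons_some hx, gain_cons_some hx']
        by_cases ha : a = 0
        · subst ha
          have e : ∀ y : Fin m, (if (0:Fin 2) = 0 then u 0 y else 0) = u 0 y := fun y => if_pos rfl
          rw [e, e]
          have h1 : gain u σ (R.erase x) ≤ u 0 x' + gain u σ ((R.erase x).erase x') := by
            refine ih _ x' (u 0 x') (favorite_mem hx') ?_ (hu0 x')
            intro j hj; exact favorite_max hx' j hj
          have h2 : u 0 x ≤ c := hbound x (favorite_mem hx)
          linarith
        · simp only [if_neg ha]
          have h1 : gain u σ (R.erase x) ≤ c + gain u σ ((R.erase x).erase x') := by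
            refine ih _ x' c (favorite_mem hx') ?_ hc
            intro j hj; exact hbound j (Finset.mem_of_mem_erase hj)
          linarith
      · rw [Finset.not_nonempty_iff_eq_empty] at hRe
        rw [gain_cons_some hx, hRe, gain_empty, gain_empty]
        have : (if a = 0 then u 0 x else 0) ≤ c := by
          split
          · exact hbound x (favorite_mem hx)
          · exact hc
        linarith
    · have hx' : favorite (u a) (R.erase z) = some x := favorite_erase hx (Ne.symm hxz)
      rw [gain_cons_some hx, gain_cons_some hx', Finset.erase_right_comm]
      have h1 : gain u σ (R.erase x) ≤ c + gain u σ ((R.erase x).erase z) := by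
        refine ih _ z c (Finset.mem_erase.2 ⟨Ne.symm hxz, hz⟩) ?_ hc
        intro j hj; exact hbound j (Finset.mem_of_mem_erase hj)
      linarith
end
section
variable {u : Fin 2 → Fin m → ℝ} (hu0 : ∀ j, 0 ≤ u 0 j)

lemma pick0 (j : Fin m) : (if (0:Fin 2) = 0 then u 0 j else 0) = u 0 j := if_pos rfl
lemma pick1 (j : Fin m) : (if (1:Fin 2) = 0 then u 0 j else 0) = 0 := if_neg (by decide)

include hu0

lemma gain_exchange : ∀ (σ : List (Fin 2)) (R : Finset (Fin m)) (a b : Fin m),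
    a ∈ R → b ∉ R → (∀ j ∈ R, beats (u 0) b j) →
    (∀ j ∈ insert b (R.erase a), beats (u 1) a j) →
    gain u σ R ≤ gain u σ (insert b (R.erase a)) := by
  intro σ
  induction σ with
  | nil => intro R a b _ _ _ _; simp
  | cons c σ ih =>
    intro R a b haR hbR h0 h1
    have hab : a ≠ b := fun h => hbR (h ▸ haR)
    have hbe : b ∉ R.erase a := fun h => hbR (Finset.mem_of_mem_erase h)
    have hRsub : R.erase a ⊆ insert b (R.erase a) := Finset.subset_insert _ _
    have hc : c = 0 ∨ c = 1 := by omega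
    rcases hc with hc | hc <;> subst hc
    · -- agent 0 moves
      obtain ⟨x0, hx0⟩ := exists_favorite (u := u 0) ⟨a, haR⟩
      have hfav' : favorite (u 0) (insert b (R.erase a)) = some b := by
        refine favorite_of_spec (Finset.mem_insert_self _ _) ?_
        intro j' hj' hne
        rcases Finset.mem_insert.1 hj' with h | h
        · exact absurd h hne
        · exact h0 j' (Finset.mem_of_mem_erase h)
      rw [gain_cons_some hx0, gain_cons_some hfav', pick0, pick0,
        Finset.erase_insert hbe]
      have hval : u 0 x0 ≤ u 0 b := beats_le (h0 x0 (favorite_mem hx0))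
      by_cases hx0a : x0 = a
      · subst hx0a; exact add_le_add hval (le_refl _)
      · have htail : gain u σ (R.erase x0) ≤ gain u σ (R.erase a) := by
          have hrw : insert x0 ((R.erase x0).erase a) = R.erase a := by
            rw [Finset.erase_right_comm, Finset.insert_erase
              (Finset.mem_erase.2 ⟨hx0a, favorite_mem hx0⟩)]
          rw [← hrw]
          refine ih (R.erase x0) a x0 (Finset.mem_erase.2 ⟨Ne.symm hx0a, haR⟩)
            (Finset.notMem_erase _ _) ?_ ?_
          · intro j hj
            exact (favorite_spec hx0).2 j (Finset.mem_of_mem_erase hj)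
              (Finset.mem_erase.1 hj).1
          · intro j hj
            rw [hrw] at hj
            exact h1 j (hRsub hj)
        exact add_le_add hval htail
    · -- agent 1 moves
      have hfavR : favorite (u 1) R = some a := by
        refine favorite_of_spec haR ?_
        intro j' hj' hne
        exact h1 j' (hRsub (Finset.mem_erase.2 ⟨hne, hj'⟩))
      obtain ⟨cc, hcc⟩ := exists_favorite (u := u 1)
        (⟨b, Finset.mem_insert_self _ _⟩ : (insert b (R.erase a)).Nonempty)
      rw [gain_cons_some hfavR, gain_cons_some hcc, pick1, pick1, zero_add, zero_add]
      by_cases hccb : cc = b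
      · subst hccb; rw [Finset.erase_insert hbe]
      · have hccR : cc ∈ R.erase a := by
          rcases Finset.mem_insert.1 (favorite_mem hcc) with h | h
          · exact absurd h hccb
          · exact h
        have hrw : (insert b (R.erase a)).erase cc = insert b ((R.erase a).erase cc) :=
          Finset.erase_insert_of_ne (Ne.symm hccb)
        rw [hrw]
        refine ih (R.erase a) cc b hccR hbe ?_ ?_
        · intro j hj; exact h0 j (Finset.mem_of_mem_erase hj)
        · intro j hj
          rw [← hrw] at hj
          exact (favorite_spec hcc).2 j (Finset.mem_of_mem_erase hj)
            (Finset.mem_erase.1 hj).1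

lemma gain_flip (σ : List (Fin 2)) (R : Finset (Fin m)) :
    gain u (1 :: σ) R ≤ gain u (0 :: σ) R := by
  rcases Finset.eq_empty_or_nonempty R with rfl | hne
  · rw [gain_cons_none (favorite_empty _), gain_cons_none (favorite_empty _)]
  · obtain ⟨x, hx⟩ := exists_favorite (u := u 0) hne
    obtain ⟨y, hy⟩ := exists_favorite (u := u 1) hne
    rw [gain_cons_some hx, gain_cons_some hy, pick0, pick1, zero_add]
    calc gain u σ (R.erase y) ≤ gain u σ R := gain_erase_le hu0 σ R y
      _ ≤ u 0 x + gain u σ (R.erase x) :=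
        gain_le_erase_add hu0 σ R x (u 0 x) (favorite_mem hx)
          (fun j hj => favorite_max hx j hj) (hu0 x)

lemma gain_swap (σ : List (Fin 2)) (R : Finset (Fin m)) :
    gain u (1 :: 0 :: σ) R ≤ gain u (0 :: 1 :: σ) R := by
  rcases Finset.eq_empty_or_nonempty R with rfl | hne
  · rw [gain_empty, gain_empty]
  · obtain ⟨x, hx⟩ := exists_favorite (u := u 0) hne
    obtain ⟨y, hy⟩ := exists_favorite (u := u 1) hne
    rw [gain_cons_some hy, gain_cons_some hx, pick0, pick1, zero_add]
    by_cases hxy : x = y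
    · subst hxy
      rcases Finset.eq_empty_or_nonempty (R.erase x) with hRe | hRe
      · rw [hRe, gain_cons_none (favorite_empty _), gain_cons_none (favorite_empty _),
          gain_empty]
        simpa using hu0 x
      · obtain ⟨x2, hx2⟩ := exists_favorite (u := u 0) hRe
        obtain ⟨y2, hy2⟩ := exists_favorite (u := u 1) hRe
        rw [gain_cons_some hx2, gain_cons_some hy2, pick0, pick1, zero_add]
        have hval : u 0 x2 ≤ u 0 x :=
          favorite_max hx x2 (Finset.mem_of_mem_erase (favorite_mem hx2))
        by_cases h22 : x2 = y2
        · subst h22; exact add_le_add hval (le_refl _)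
        · have htail : gain u σ ((R.erase x).erase x2) ≤ gain u σ ((R.erase x).erase y2) := by
            have hrw : insert x2 (((R.erase x).erase x2).erase y2) = (R.erase x).erase y2 := by
              rw [Finset.erase_right_comm, Finset.insert_erase
                (Finset.mem_erase.2 ⟨h22, favorite_mem hx2⟩)]
            rw [← hrw]
            refine gain_exchange hu0 σ _ y2 x2
              (Finset.mem_erase.2 ⟨Ne.symm h22, favorite_mem hy2⟩)
              (Finset.notMem_erase _ _) ?_ ?_
            · intro j hj
              exact (favorite_spec hx2).2 j (Finset.mem_of_mem_erase hj)
                (Finset.mem_erase.1 hj).1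
            · intro j hj
              rw [hrw] at hj
              exact (favorite_spec hy2).2 j (Finset.mem_of_mem_erase hj)
                (Finset.mem_erase.1 hj).1
          exact add_le_add hval htail
    · have hx' : favorite (u 0) (R.erase y) = some x :=
        favorite_erase hx (fun h => hxy (h ▸ rfl))
      have hy' : favorite (u 1) (R.erase x) = some y := favorite_erase hy hxy
      rw [gain_cons_some hx', gain_cons_some hy', pick0, pick1, zero_add,
        Finset.erase_right_comm]

lemma gain_movefront : ∀ (ρ₁ : List (Fin 2)), (∀ a ∈ ρ₁, a = 1) →
    ∀ (τ : List (Fin 2)) (R : Finset (Fin m)),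
    gain u (ρ₁ ++ 0 :: τ) R ≤ gain u (0 :: (ρ₁ ++ τ)) R := by
  intro ρ₁
  induction ρ₁ with
  | nil => intro _ τ R; simp
  | cons a os ih =>
    intro hall τ R
    have ha : a = 1 := hall a List.mem_cons_self
    subst ha
    have hos : ∀ a ∈ os, a = 1 := fun a h => hall a (List.mem_cons_of_mem _ h)
    rcases Finset.eq_empty_or_nonempty R with rfl | hne
    · rw [gain_empty, gain_empty]
    · obtain ⟨y, hy⟩ := exists_favorite (u := u 1) hne
      have step1 : gain u ((1 :: os) ++ 0 :: τ) R = gain u (os ++ 0 :: τ) (R.erase y) := by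
        rw [List.cons_append, gain_cons_some hy, pick1, zero_add]
      have step2 : gain u (1 :: 0 :: (os ++ τ)) R = gain u (0 :: (os ++ τ)) (R.erase y) := by
        rw [gain_cons_some hy, pick1, zero_add]
      calc gain u ((1 :: os) ++ 0 :: τ) R = gain u (os ++ 0 :: τ) (R.erase y) := step1
        _ ≤ gain u (0 :: (os ++ τ)) (R.erase y) := ih hos τ _
        _ = gain u (1 :: 0 :: (os ++ τ)) R := step2.symm
        _ ≤ gain u (0 :: 1 :: (os ++ τ)) R := gain_swap hu0 _ _
        _ = gain u (0 :: ((1 :: os) ++ τ)) R := by rw [List.cons_append]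
end
lemma exists_split {ρ : List (Fin 2)} (h : (0:Fin 2) ∈ ρ) :
    ∃ ρ₁ ρ₂, ρ = ρ₁ ++ 0 :: ρ₂ ∧ ∀ a ∈ ρ₁, a = 1 := by
  induction ρ with
  | nil => simp at h
  | cons b ρt ih =>
    by_cases hb : b = 0
    · exact ⟨[], ρt, by simp [hb], by simp⟩
    · have hb1 : b = 1 := by omega
      have h0t : (0:Fin 2) ∈ ρt := by
        rcases List.mem_cons.1 h with h | h
        · exact absurd h.symm hb
        · exact h
      obtain ⟨ρ₁, ρ₂, hs, hall⟩ := ih h0t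
      exact ⟨b :: ρ₁, ρ₂, by simp [hs], by
        intro x hx
        rcases List.mem_cons.1 hx with h | h
        · rw [h, hb1]
        · exact hall x h⟩

lemma gain_all_ones {u : Fin 2 → Fin m → ℝ} :
    ∀ (π : List (Fin 2)), (∀ a ∈ π, a = 1) → ∀ R, gain u π R = 0 := by
  intro π
  induction π with
  | nil => intro _ R; simp
  | cons a σ ih =>
    intro hall R
    have ha : a = 1 := hall a List.mem_cons_self
    subst ha
    have hos : ∀ a ∈ σ, a = 1 := fun a h => hall a (List.mem_cons_of_mem _ h)
    rcases h : favorite (u 1) R with _ | j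
    · rw [gain_cons_none h]; exact ih hos R
    · rw [gain_cons_some h, pick1, zero_add]; exact ih hos _

section
variable {u : Fin 2 → Fin m → ℝ} (hu0 : ∀ j, 0 ≤ u 0 j)
include hu0

lemma gain_mono : ∀ (n : ℕ) (π π' : List (Fin 2)), π.length = n → π'.length = n →
    (∀ k, (π.take k).count 0 ≤ (π'.take k).count 0) →
    ∀ R : Finset (Fin m), gain u π R ≤ gain u π' R := by
  intro n
  induction n with
  | zero =>
    intro π π' hl hl' _ R
    rw [List.length_eq_zero_iff.1 hl, List.length_eq_zero_iff.1 hl']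
  | succ n ih =>
    intro π π' hl hl' hdom R
    rcases π with _ | ⟨a, ρ⟩
    · simp at hl
    rcases π' with _ | ⟨a', ρ'⟩
    · simp at hl'
    simp only [List.length_cons, Nat.succ.injEq] at hl hl'
    by_cases haa : a = a'
    · subst haa
      have hdom' : ∀ k, (ρ.take k).count 0 ≤ (ρ'.take k).count 0 := by
        intro k
        have := hdom (k + 1)
        rw [List.take_succ_cons, List.take_succ_cons, List.count_cons, List.count_cons] at this
        omega
      rcases h : favorite (u a) R with _ | j
      · rw [gain_cons_none h, gain_cons_none h]
        exact ih ρ ρ' hl hl' hdom' R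
      · rw [gain_cons_some h, gain_cons_some h]
        exact add_le_add (le_refl _) (ih ρ ρ' hl hl' hdom' _)
    · -- heads differ: a = 1, a' = 0
      have h1 := hdom 1
      simp only [List.take_succ_cons, List.take_zero, List.count_cons, List.count_nil] at h1
      have ha : a = 1 := by
        by_contra hne
        have ha0 : a = 0 := by omega
        subst ha0
        have : a' = 0 := by
          by_contra h'
          simp [h'] at h1
        exact haa this.symm
      have ha' : a' = 0 := by
        by_contra hne
        have : a' = 1 := by omega
        rw [ha, this] at haa
        exact haa rfl
      subst ha; subst ha'
      by_cases h0 : (0:Fin 2) ∈ ρ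
      · obtain ⟨ρ₁, ρ₂, hs, hall⟩ := exists_split h0
        subst hs
        set τ : List (Fin 2) := 1 :: (ρ₁ ++ ρ₂) with hτ
        have hlτ : τ.length = n := by
          simp only [hτ, List.length_cons, List.length_append]
          simp [List.length_append] at hl
          omega
        have hdomτ : ∀ k, (τ.take k).count 0 ≤ (ρ'.take k).count 0 := by
          intro k
          have hτtake : τ.take k = ((1 :: ρ₁).take k) ++ (ρ₂.take (k - (ρ₁.length + 1))) := by
            have : τ = (1 :: ρ₁) ++ ρ₂ := by simp [hτ]
            rw [this, List.take_append]
            simp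
          rcases le_or_gt k (ρ₁.length + 1) with hk | hk
          · have hc0 : (τ.take k).count 0 = 0 := by
              rw [hτtake, Nat.sub_eq_zero_of_le (by simpa using hk), List.take_zero,
                List.append_nil, List.count_eq_zero]
              intro hmem
              have := List.mem_of_mem_take hmem
              rcases List.mem_cons.1 this with h | h
              · exact absurd h.symm (by decide)
              · exact absurd (hall _ h).symm (by decide)
            omega
          · have hρ₁ : List.count 0 ρ₁ = 0 := by
              rw [List.count_eq_zero]
              intro hmem
              exact absurd (hall _ hmem).symm (by decide)
            have hd := hdom (k + 1)
            have hπtake : ((1:Fin 2) :: (ρ₁ ++ 0 :: ρ₂)).take (k + 1)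
                = (1 :: ρ₁) ++ (0 :: ρ₂.take (k - ρ₁.length - 1)) := by
              have : (1:Fin 2) :: (ρ₁ ++ 0 :: ρ₂) = (1 :: ρ₁) ++ (0 :: ρ₂) := by simp
              rw [this, List.take_append,
                List.take_of_length_le (by simp; omega)]
              congr 1
              have h2 : k + 1 - (1 :: ρ₁).length = (k - ρ₁.length - 1) + 1 := by
                simp; omega
              rw [h2, List.take_succ_cons]
            rw [hπtake, List.take_succ_cons] at hd
            have hτc : (τ.take k).count 0 = (ρ₂.take (k - ρ₁.length - 1)).count 0 := by
              rw [hτtake, List.take_of_length_le (by simp; omega)]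
              have h3 : k - (ρ₁.length + 1) = k - ρ₁.length - 1 := by omega
              rw [h3]
              simp [List.count_append, List.count_cons, hρ₁]
            rw [hτc]
            simp [List.count_append, List.count_cons, hρ₁] at hd ⊢
            omega
        have hmove : gain u ((1:Fin 2) :: (ρ₁ ++ 0 :: ρ₂)) R ≤ gain u (0 :: τ) R := by
          have h1 : (1:Fin 2) :: (ρ₁ ++ 0 :: ρ₂) = (1 :: ρ₁) ++ 0 :: ρ₂ := by simp
          have h2 : (0:Fin 2) :: τ = 0 :: ((1 :: ρ₁) ++ ρ₂) := by simp [hτ]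
          rw [h1, h2]
          refine gain_movefront hu0 (1 :: ρ₁) ?_ ρ₂ R
          intro x hx
          rcases List.mem_cons.1 hx with h | h
          · exact h
          · exact hall x h
        refine le_trans hmove ?_
        rcases h : favorite (u 0) R with _ | j
        · rw [gain_cons_none h, gain_cons_none h]
          exact ih τ ρ' hlτ hl' hdomτ R
        · rw [gain_cons_some h, gain_cons_some h]
          exact add_le_add (le_refl _) (ih τ ρ' hlτ hl' hdomτ _)
      · have hzero : gain u ((1:Fin 2) :: ρ) R = 0 := by
          refine gain_all_ones _ ?_ R
          intro x hx
          rcases List.mem_cons.1 hx with h | h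
          · exact h
          · have : x ≠ 0 := fun hc => h0 (hc ▸ h)
            omega
        rw [hzero]
        exact gain_nonneg hu0 _ _
end

lemma sum_foldl {u : Fin 2 → Fin m → ℝ} :
    ∀ (π : List (Fin 2)) (st : Finset (Fin m) × (Fin 2 → Finset (Fin m))),
    (∀ i, Disjoint (st.2 i) st.1) →
    ∑ x ∈ (π.foldl (pickStep u) st).2 0, u 0 x = (∑ x ∈ st.2 0, u 0 x) + gain u π st.1 := by
  intro π
  induction π with
  | nil => intro st _; simp
  | cons a σ ih =>
    intro st hdisj
    rw [List.foldl_cons]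
    rcases h : favorite (u a) st.1 with _ | j
    · have hstep : pickStep u st a = st := by
        unfold pickStep; rw [h]
      rw [hstep, gain_cons_none h]
      exact ih st hdisj
    · have hstep : pickStep u st a
          = (st.1.erase j, Function.update st.2 a (insert j (st.2 a))) := by
        unfold pickStep; rw [h]
      rw [hstep, gain_cons_some h]
      have hjR : j ∈ st.1 := favorite_mem h
      have hdisj' : ∀ i, Disjoint ((Function.update st.2 a (insert j (st.2 a))) i)
          (st.1.erase j) := by
        intro i
        by_cases hia : i = a
        · subst hia
          rw [Function.update_self, Finset.disjoint_insert_left]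
          exact ⟨Finset.notMem_erase _ _,
            Finset.disjoint_of_subset_right (Finset.erase_subset _ _) (hdisj i)⟩
        · rw [Function.update_of_ne hia]
          exact Finset.disjoint_of_subset_right (Finset.erase_subset _ _) (hdisj i)
      rw [ih _ hdisj']
      dsimp only
      by_cases ha : a = 0
      · subst ha
        rw [Function.update_self, pick0,
          Finset.sum_insert (Finset.disjoint_right.1 (hdisj 0) hjR)]
        ring
      · rw [Function.update_of_ne (fun hc => ha hc.symm), if_neg ha]
        ring

/-- Two agents (agent 1 is `0`, agent 2 is `1`). If `π'` is obtained from
`π` (both of length `m`) by moving some of agent 1's picks earlier, inserting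
occurrences of agent 1, and trimming the suffix to length `m` — which, for
two agents, is equivalent to saying that every prefix of `π'` contains at least as
many picks of agent 1 as the corresponding prefix of `π` — then for any utility
functions agent 1 receives at least as much total utility from the allocation
produced by `π'` as from the allocation produced by `π`. In particular, for two
agents any weight-consistent family of picking sequences satisfies
weight-monotonicity. -/
theorem weight_consistent_two_agents_monotone
    (m : ℕ) (u : Fin 2 → Fin m → ℝ) (hu : ∀ i j, 0 ≤ u i j)
    (π π' : List (Fin 2)) (hlen : π.length = m) (hlen' : π'.length = m)
    (hdom : ∀ k : ℕ, (π.take k).count 0 ≤ (π'.take k).count 0) :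
    (∑ x ∈ allocate u π 0, u 0 x) ≤ ∑ x ∈ allocate u π' 0, u 0 x := by
  have hu0 : ∀ j, 0 ≤ u 0 j := hu 0
  have hdisj : ∀ i : Fin 2, Disjoint ((fun _ => (∅ : Finset (Fin m))) i)
      (Finset.univ : Finset (Fin m)) := fun i => Finset.disjoint_empty_left _
  have h1 : (∑ x ∈ allocate u π 0, u 0 x) = gain u π Finset.univ := by
    unfold allocate
    rw [sum_foldl π _ hdisj]
    simp
  have h2 : (∑ x ∈ allocate u π' 0, u 0 x) = gain u π' Finset.univ := by
    unfold allocate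
    rw [sum_foldl π' _ hdisj]
    simp
  rw [h1, h2]
  exact gain_mono hu0 m π π' hlen hlen' hdom Finset.univ
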